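/- Let V be a pseudovariety of semigroups containing J. Then for every nonempty family (S_i)_{i∈I} of one-element semigroups, the natural mapping ι : *_{i∈I} S_i → ∐^V_{i∈I} S_i from the free product to the V-coproduct is injective. -/

import Mathlib

set_option autoImplicit false

/-! ### General notions: topological semigroups, pseudovarieties, pro-V semigroups -/

/-- Continuity of a map into a type regarded with the discrete topology. -/
def ContinuousDisc {S : Type} [TopologicalSpace S] {T : Type} (f : S → T) : Prop :=
  @Continuous S T _ ⊥ f

/-- A pseudovariety of semigroups: a class of finite semigroups closed under
homomorphic images, subsemigroups and finite direct products. -/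
structure Pseudovariety : Type 1 where
  Mem : ∀ (S : Type) [Semigroup S], Prop
  finite : ∀ (S : Type) [Semigroup S], Mem S → Finite S
  closed_hom : ∀ (S T : Type) [Semigroup S] [Semigroup T] (f : S →ₙ* T),
    Mem S → Function.Surjective f → Mem T
  closed_sub : ∀ (S T : Type) [Semigroup S] [Semigroup T] (f : T →ₙ* S),
    Mem S → Function.Injective f → Mem T
  closed_prod : ∀ (ι : Type) [Finite ι] (S : ι → Type) [∀ i, Semigroup (S i)],
    (∀ i, Mem (S i)) → Mem (∀ i, S i)

/-- A bundled member of a pseudovariety `V` (a finite semigroup belonging to `V`),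
always regarded as carrying the discrete topology. -/
structure SgrIn (V : Pseudovariety) : Type 1 where
  carrier : Type
  [str : Semigroup carrier]
  mem : V.Mem carrier

attribute [instance] SgrIn.str

/-- A (bundled) topological semigroup. -/
structure TopSgr : Type 1 where
  carrier : Type
  [str : Semigroup carrier]
  [top : TopologicalSpace carrier]

attribute [instance] TopSgr.str TopSgr.top

/-- A finite semigroup regarded as a topological semigroup with the discrete topology. -/
def discTopSgr (S : Type) [Semigroup S] : TopSgr :=
  @TopSgr.mk S _ ⊥

/-- A pro-V semigroup: a compact Hausdorff topological semigroup that is residually `V`. -/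
def IsProV (V : Pseudovariety) (S : TopSgr) : Prop :=
  CompactSpace S.carrier ∧ T2Space S.carrier ∧ ContinuousMul S.carrier ∧
    ∀ x y : S.carrier, x ≠ y → ∃ (F : SgrIn V) (f : S.carrier →ₙ* F.carrier),
      ContinuousDisc ⇑f ∧ f x ≠ f y

/-- A profinite semigroup: a compact Hausdorff totally disconnected topological semigroup. -/
def IsProfiniteSgr (S : TopSgr) : Prop :=
  CompactSpace S.carrier ∧ T2Space S.carrier ∧ TotallyDisconnectedSpace S.carrier ∧
    ContinuousMul S.carrier

/-- `C`, together with the continuous homomorphisms `φ i`, is a `V`-coproduct of the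
family `S` of pro-`V` semigroups. -/
structure IsCoproduct (V : Pseudovariety) {I : Type} (S : I → TopSgr)
    (C : TopSgr) (φ : ∀ i, (S i).carrier →ₙ* C.carrier) : Prop where
  proV : IsProV V C
  cont : ∀ i, Continuous ⇑(φ i)
  universal : ∀ (T : TopSgr), IsProV V T →
    ∀ ψ : ∀ i, (S i).carrier →ₙ* T.carrier, (∀ i, Continuous ⇑(ψ i)) →
      ∃! Ψ : C.carrier →ₙ* T.carrier, Continuous ⇑Ψ ∧ ∀ i, Ψ.comp (φ i) = ψ i

/-- `P`, together with the homomorphisms `e i`, is a free product (coproduct in the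
category of semigroups) of the family `S`. -/
structure IsFreeProduct {I : Type} (S : I → Type) [∀ i, Semigroup (S i)]
    (P : Type) [Semigroup P] (e : ∀ i, S i →ₙ* P) : Prop where
  universal : ∀ (T : Type) [Semigroup T] (f : ∀ i, S i →ₙ* T),
    ∃! F : P →ₙ* T, ∀ i, F.comp (e i) = f i

/-! ### Particular pseudovarieties and related notions -/

/-- `V` contains the pseudovariety `Sl` of finite semilattices. -/
def ContainsSl (V : Pseudovariety) : Prop :=
  ∀ (S : Type) [Semigroup S] [Finite S],
    (∀ x y : S, x * y = y * x) → (∀ x : S, x * x = x) → V.Mem S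

/-- Green's `J`-preorder: `s ≤_J t`, i.e. `s ∈ S^I t S^I`. -/
def JBelow {S : Type} [Semigroup S] (s t : S) : Prop :=
  ∃ x y : WithOne S, x * (t : WithOne S) * y = (s : WithOne S)

/-- `V` contains the pseudovariety `J` of finite `J`-trivial semigroups. -/
def ContainsJ (V : Pseudovariety) : Prop :=
  ∀ (S : Type) [Semigroup S] [Finite S],
    (∀ s t : S, JBelow s t → JBelow t s → s = t) → V.Mem S

/-- The preimage of an idempotent under a semigroup homomorphism, as a subsemigroup. -/
def fiberSub {S T : Type} [Semigroup S] [Semigroup T] (ψ : S →ₙ* T) (e : T)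
    (he : e * e = e) : Subsemigroup S where
  carrier := ⇑ψ ⁻¹' {e}
  mul_mem' := by
    intro a b ha hb
    simp only [Set.mem_preimage, Set.mem_singleton_iff] at *
    rw [map_mul, ha, hb, he]

/-- The set of products of `n+1` elements of a semigroup (so `nthProds S 0 = S`). -/
def nthProds (S : Type) [Semigroup S] : ℕ → Set S
  | 0 => Set.univ
  | n + 1 => {x | ∃ a y, y ∈ nthProds S n ∧ x = a * y}

/-- A nilpotent semigroup: it has a zero `z` and some power of the semigroup is `{z}`. -/
def IsNilpotentSgr (S : Type) [Semigroup S] : Prop :=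
  ∃ z : S, (∀ x : S, z * x = z ∧ x * z = z) ∧ ∃ n : ℕ, nthProds S n ⊆ {z}

/-- A generator of the Mal'cev product `N ⓜ V`: a finite semigroup admitting a surjective
homomorphism onto a member of `V` all of whose idempotent fibers are nilpotent. -/
def NMalcevGen (V : Pseudovariety) (S : Type) [Semigroup S] : Prop :=
  Finite S ∧ ∃ (T : SgrIn V) (ψ : S →ₙ* T.carrier), Function.Surjective ψ ∧
    ∀ (e : T.carrier) (he : e * e = e), IsNilpotentSgr (fiberSub ψ e he)

/-- The equality `N ⓜ V = V`: `V` coincides with the smallest pseudovariety containing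
all finite semigroups admitting an `N`-morphism onto some member of `V`. -/
def NMalcevFixed (V : Pseudovariety) : Prop :=
  ∀ (S : Type) [Semigroup S] [Finite S],
    V.Mem S ↔ ∀ U : Pseudovariety,
      (∀ (S' : Type) [Semigroup S'], NMalcevGen V S' → U.Mem S') → U.Mem S

/-- A completely simple semigroup: simple with a primitive idempotent. -/
def IsCompletelySimple (S : Type) [Semigroup S] : Prop :=
  (∀ J : Set S, J.Nonempty → (∀ s x : S, x ∈ J → s * x ∈ J ∧ x * s ∈ J) → J = Set.univ) ∧
  ∃ e : S, e * e = e ∧ ∀ f : S, f * f = f → e * f = f → f * e = f → f = e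

/-- An equidivisible semigroup. -/
def Equidivisible (S : Type) [Semigroup S] : Prop :=
  ∀ u v x y : S, u * v = x * y →
    ∃ t : WithOne S,
      ((x : WithOne S) = (u : WithOne S) * t ∧ t * (y : WithOne S) = (v : WithOne S)) ∨
      ((x : WithOne S) * t = (u : WithOne S) ∧ (y : WithOne S) = t * (v : WithOne S))

/-! ### The two-sided Karnofsky–Rhodes expansion -/

/-- Vertices of the two-sided Cayley graph of `T`: pairs of elements of `T^I`. -/
abbrev KRVtx (T : Type) : Type := WithOne T × WithOne T

/-- Edges of the two-sided Cayley graph: (source, label, target). -/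
abbrev KREdge (A T : Type) : Type := KRVtx T × A × KRVtx T

/-- The image in `T^I` of a letter. -/
def letterImg {A T : Type} [Semigroup T] (ψ : FreeSemigroup A →ₙ* T) (a : A) : WithOne T :=
  (ψ (FreeSemigroup.of a) : WithOne T)

/-- The image in `T^I` of a (possibly empty) word. -/
def wordImg {A T : Type} [Semigroup T] (ψ : FreeSemigroup A →ₙ* T) (w : List A) : WithOne T :=
  (w.map (letterImg ψ)).prod

/-- `e` is an edge of the two-sided Cayley graph `Γ_ψ`. -/
def IsKREdge {A T : Type} [Semigroup T] (ψ : FreeSemigroup A →ₙ* T) (e : KREdge A T) : Prop :=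
  e.1.1 * letterImg ψ e.2.1 = e.2.2.1 ∧ e.1.2 = letterImg ψ e.2.1 * e.2.2.2

/-- One step along an edge of `Γ_ψ` (used to define directed paths). -/
def KRStep {A T : Type} [Semigroup T] (ψ : FreeSemigroup A →ₙ* T) (v w : KRVtx T) : Prop :=
  ∃ a : A, v.1 * letterImg ψ a = w.1 ∧ v.2 = letterImg ψ a * w.2

/-- A transition edge of `Γ_ψ`: an edge from whose target there is no directed path
back to its source. -/
def IsTransEdge {A T : Type} [Semigroup T] (ψ : FreeSemigroup A →ₙ* T) (e : KREdge A T) : Prop :=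
  IsKREdge ψ e ∧ ¬ Relation.ReflTransGen (KRStep ψ) e.2.2 e.1

/-- The list of letters of an element of the free semigroup. -/
def letters {A : Type} (u : FreeSemigroup A) : List A := u.head :: u.tail

/-- The set of edges of the path `p_u` of `Γ_ψ` from `(I, ψ u)` to `(ψ u, I)` labeled by `u`. -/
def pathEdges {A T : Type} [Semigroup T] (ψ : FreeSemigroup A →ₙ* T) (u : FreeSemigroup A) :
    Set (KREdge A T) :=
  {e | ∃ (w₁ w₂ : List A) (a : A), letters u = w₁ ++ a :: w₂ ∧
    e = ((wordImg ψ w₁, wordImg ψ (a :: w₂)), a, (wordImg ψ (w₁ ++ [a]), wordImg ψ w₂))}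

/-- The set `T(p_u)` of transition edges of `Γ_ψ` occurring in the path `p_u`. -/
def transEdges {A T : Type} [Semigroup T] (ψ : FreeSemigroup A →ₙ* T) (u : FreeSemigroup A) :
    Set (KREdge A T) :=
  {e ∈ pathEdges ψ u | IsTransEdge ψ e}

/-- A realization of the two-sided Karnofsky–Rhodes expansion of `ψ : A⁺ → T`:
a semigroup `K = T_ψ^KR` together with the projection `ψ^KR : A⁺ → K`, which is onto and
identifies `u` and `v` exactly when `ψ u = ψ v` and `T(p_u) = T(p_v)`, and the canonical
homomorphism `π : T_ψ^KR → T` with `π ∘ ψ^KR = ψ`. -/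
structure KRExp {A T : Type} [Semigroup T] (ψ : FreeSemigroup A →ₙ* T) : Type 1 where
  K : Type
  [strK : Semigroup K]
  [finK : Finite K]
  ψKR : FreeSemigroup A →ₙ* K
  π : K →ₙ* T
  surj : Function.Surjective ⇑ψKR
  ker : ∀ u v : FreeSemigroup A, ψKR u = ψKR v ↔
    (ψ u = ψ v ∧ transEdges ψ u = transEdges ψ v)
  proj : π.comp ψKR = ψ

attribute [instance] KRExp.strK KRExp.finK

/-- The data of a two-sided Karnofsky–Rhodes expansion of a finite semigroup `T`:
a finite alphabet `A`, an onto homomorphism `ψ : A⁺ → T`, and a realization `T_ψ^KR`. -/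
structure KRData (T : Type) [Semigroup T] : Type 1 where
  A : Type
  [finA : Finite A]
  ψ : FreeSemigroup A →ₙ* T
  surjψ : Function.Surjective ⇑ψ
  E : KRExp ψ

attribute [instance] KRData.finA

/-- `V` is closed under two-sided Karnofsky–Rhodes expansion. -/
def ClosedUnderKR (V : Pseudovariety) : Prop :=
  ∀ (A T : Type) [Finite A] [Semigroup T], V.Mem T →
    ∀ (ψ : FreeSemigroup A →ₙ* T), Function.Surjective ⇑ψ →
      ∀ E : KRExp ψ, V.Mem E.K

/-! ### KR-covers -/

/-- `S` is a KR-cover of the finite semigroup `T`. -/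
def IsKRCoverOf (S : TopSgr) (T : Type) [Semigroup T] [Finite T] : Prop :=
  (∃ φ : S.carrier →ₙ* T, ContinuousDisc ⇑φ ∧ Function.Surjective ⇑φ) ∧
  ∀ φ : S.carrier →ₙ* T, ContinuousDisc ⇑φ → Function.Surjective ⇑φ →
    ∃ (D : KRData T) (φψ : S.carrier →ₙ* D.E.K),
      ContinuousDisc ⇑φψ ∧ D.E.π.comp φψ = φ

/-- `S` is a KR-cover: a KR-cover of each of its finite continuous homomorphic images. -/
def IsKRCover (S : TopSgr) : Prop :=
  ∀ (T : Type) [Semigroup T] [Finite T],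
    (∃ φ : S.carrier →ₙ* T, ContinuousDisc ⇑φ ∧ Function.Surjective ⇑φ) →
    IsKRCoverOf S T

/-- `S` is `V`-projective. -/
def IsVProjective (V : Pseudovariety) (S : TopSgr) : Prop :=
  IsProV V S ∧ ∀ (T R : TopSgr), IsProV V T → IsProV V R →
    ∀ (f : S.carrier →ₙ* T.carrier) (g : R.carrier →ₙ* T.carrier),
      Continuous ⇑f → Continuous ⇑g → Function.Surjective ⇑g →
        ∃ f' : S.carrier →ₙ* R.carrier, Continuous ⇑f' ∧ g.comp f' = f

/-! ### Strong KR-covers and letter super-cancellativity -/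

/-- `κ : A → S` is a generating mapping: its image generates a dense subsemigroup. -/
def GeneratingMap {A : Type} (S : TopSgr) (κ : A → S.carrier) : Prop :=
  Dense (Subsemigroup.closure (Set.range κ) : Set S.carrier)

/-- The homomorphism `A⁺ → T` extending `a ↦ φ (κ a)`. -/
def liftGen {A : Type} (S : TopSgr) (κ : A → S.carrier) {T : Type} [Semigroup T]
    (φ : S.carrier →ₙ* T) : FreeSemigroup A →ₙ* T :=
  FreeSemigroup.lift (fun a => φ (κ a))

/-- `S` is a strong KR-cover of the finite semigroup `T` with respect to the
generating mapping `κ`. -/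
def IsStrongKRCoverOfWrt {A : Type} (S : TopSgr) (κ : A → S.carrier)
    (T : Type) [Semigroup T] [Finite T] : Prop :=
  ∀ φ : S.carrier →ₙ* T, ContinuousDisc ⇑φ → Function.Surjective ⇑φ →
    ∃ (E : KRExp (liftGen S κ φ)) (φκ : S.carrier →ₙ* E.K),
      ContinuousDisc ⇑φκ ∧ E.π.comp φκ = φ ∧
      ∀ a : A, φκ (κ a) = E.ψKR (FreeSemigroup.of a)

/-- `S` is a strong KR-cover of the finite semigroup `T` (with respect to some
generating mapping with finite domain). -/
def IsStrongKRCoverOf (S : TopSgr) (T : Type) [Semigroup T] [Finite T] : Prop :=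
  ∃ A : Type, Finite A ∧ ∃ κ : A → S.carrier, GeneratingMap S κ ∧
    IsStrongKRCoverOfWrt S κ T

/-- `S` is a strong KR-cover: a strong KR-cover of each of its finite continuous
homomorphic images. -/
def IsStrongKRCover (S : TopSgr) : Prop :=
  ∀ (T : Type) [Semigroup T] [Finite T],
    (∃ φ : S.carrier →ₙ* T, ContinuousDisc ⇑φ ∧ Function.Surjective ⇑φ) →
    IsStrongKRCoverOf S T

/-- `S` is letter super-cancellative with respect to the subset `A` of `S`. -/
def IsLSC (S : TopSgr) (A : Set S.carrier) : Prop :=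
  ∀ a ∈ A, ∀ b ∈ A, ∀ u v : WithOne S.carrier,
    (u * (a : WithOne S.carrier) = v * (b : WithOne S.carrier) → a = b ∧ u = v) ∧
    ((a : WithOne S.carrier) * u = (b : WithOne S.carrier) * v → a = b ∧ u = v)

/-! ### `S^I` and inverse limits -/

/-- The sum topology on `S^I = S ∪ {I}`: the point `I` is isolated and `S` keeps
its topology. -/
def withOneTopology (S : Type) [TopologicalSpace S] : TopologicalSpace (WithOne S) where
  IsOpen V := IsOpen ((fun s : S => (s : WithOne S)) ⁻¹' V)
  isOpen_univ := by simp
  isOpen_inter := by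
    intro U V hU hV
    rw [Set.preimage_inter]
    exact hU.inter hV
  isOpen_sUnion := by
    intro s hs
    rw [Set.preimage_sUnion]
    exact isOpen_biUnion hs

/-- `S^I` as a topological semigroup (in fact a monoid): `S` with an isolated identity
adjoined. -/
def withOneTopSgr (S : TopSgr) : TopSgr :=
  @TopSgr.mk (WithOne S.carrier) _ (withOneTopology S.carrier)

/-- The inverse limit of a family of topological semigroups, as a subsemigroup of
the product. -/
def invLimSub {I : Type} [Preorder I] (S : I → TopSgr)
    (f : ∀ i j, j ≤ i → ((S i).carrier →ₙ* (S j).carrier)) :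
    Subsemigroup (∀ i, (S i).carrier) where
  carrier := {x | ∀ i j (h : j ≤ i), f i j h (x i) = x j}
  mul_mem' := by
    intro a b ha hb i j h
    simp only [Pi.mul_apply, map_mul, ha i j h, hb i j h]

/-- The inverse limit as a topological semigroup (with the topology induced from the
product topology). -/
def invLimTopSgr {I : Type} [Preorder I] (S : I → TopSgr)
    (f : ∀ i j, j ≤ i → ((S i).carrier →ₙ* (S j).carrier)) : TopSgr :=
  TopSgr.mk (invLimSub S f)

noncomputable section KRAuxSec
open scoped Classical

namespace KRAux

variable {I : Type}

/-- Full reduction of a word: collapse adjacent equal letters. -/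
def kred : List I → List I
  | [] => []
  | [a] => [a]
  | a :: b :: l => if a = b then kred (b :: l) else a :: kred (b :: l)

lemma kred_cons : ∀ (a : I) (l : List I), ∃ s, kred (a :: l) = a :: s
  | _, [] => ⟨[], rfl⟩
  | a, b :: l => by
    by_cases h : a = b
    · obtain ⟨s, hs⟩ := kred_cons b l
      exact ⟨s, by rw [kred, if_pos h, hs, h]⟩
    · exact ⟨kred (b :: l), by rw [kred, if_neg h]⟩

lemma kred_ne_nil {l : List I} (h : l ≠ []) : kred l ≠ [] := by
  cases l with
  | nil => exact absurd rfl h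
  | cons a t => obtain ⟨s, hs⟩ := kred_cons a t; simp [hs]

lemma kred_chain : ∀ l : List I, (kred l).Chain' (· ≠ ·)
  | [] => by simp [kred, List.Chain']
  | [a] => by simp [kred, List.Chain']
  | a :: b :: l => by
    by_cases h : a = b
    · rw [kred, if_pos h]; exact kred_chain (b :: l)
    · rw [kred, if_neg h]
      obtain ⟨s, hs⟩ := kred_cons b l
      rw [hs]
      exact List.isChain_cons_cons.2 ⟨h, hs ▸ kred_chain (b :: l)⟩

lemma kred_of_chain : ∀ {l : List I}, l.Chain' (· ≠ ·) → kred l = l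
  | [], _ => rfl
  | [_], _ => rfl
  | a :: b :: l, h => by
    obtain ⟨hab, h'⟩ := List.isChain_cons_cons.1 h
    rw [kred, if_neg hab, kred_of_chain h']

lemma mem_kred : ∀ {l : List I} {x : I}, x ∈ kred l → x ∈ l
  | [], x, h => by simpa [kred] using h
  | [a], x, h => by simpa [kred] using h
  | a :: b :: l, x, h => by
    by_cases hab : a = b
    · rw [kred, if_pos hab] at h
      exact List.mem_cons_of_mem a (mem_kred h)
    · rw [kred, if_neg hab] at h
      rcases List.mem_cons.1 h with h | h
      · exact h ▸ List.mem_cons_self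
      · exact List.mem_cons_of_mem a (mem_kred h)

lemma kred_append_left : ∀ (l m : List I), kred (l ++ m) = kred (kred l ++ m)
  | [], _ => rfl
  | [_], _ => rfl
  | a :: b :: l, m => by
    by_cases h : a = b
    · show kred (a :: b :: (l ++ m)) = kred (kred (a :: b :: l) ++ m)
      rw [show kred (a :: b :: (l ++ m)) = kred (b :: (l ++ m)) from by rw [kred, if_pos h],
        show kred (a :: b :: l) = kred (b :: l) from by rw [kred, if_pos h]]
      exact kred_append_left (b :: l) m
    · obtain ⟨s, hs⟩ := kred_cons b l
      show kred (a :: b :: (l ++ m)) = kred (kred (a :: b :: l) ++ m)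
      rw [show kred (a :: b :: l) = a :: kred (b :: l) from by rw [kred, if_neg h], hs]
      show kred (a :: b :: (l ++ m)) = kred (a :: b :: (s ++ m))
      rw [show kred (a :: b :: (l ++ m)) = a :: kred (b :: (l ++ m)) from by
          rw [kred, if_neg h],
        show kred (a :: b :: (s ++ m)) = a :: kred (b :: (s ++ m)) from by
          rw [kred, if_neg h]]
      rw [show b :: (s ++ m) = (b :: s) ++ m from rfl, ← hs,
        show b :: (l ++ m) = (b :: l) ++ m from rfl]
      rw [kred_append_left (b :: l) m]

lemma kred_cons_kred (a : I) (l : List I) : kred (a :: kred l) = kred (a :: l) := by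
  cases l with
  | nil => rfl
  | cons b t =>
    obtain ⟨s, hs⟩ := kred_cons b t
    have hbs : kred (b :: s) = b :: s := kred_of_chain (hs ▸ kred_chain (b :: t))
    rw [hs]
    by_cases h : a = b
    · rw [show kred (a :: b :: s) = kred (b :: s) from by rw [kred, if_pos h],
        show kred (a :: b :: t) = kred (b :: t) from by rw [kred, if_pos h], hbs, hs]
    · rw [show kred (a :: b :: s) = a :: kred (b :: s) from by rw [kred, if_neg h],
        show kred (a :: b :: t) = a :: kred (b :: t) from by rw [kred, if_neg h], hbs, hs]

lemma kred_append_right : ∀ (l m : List I), kred (l ++ m) = kred (l ++ kred m)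
  | [], m => by
    show kred m = kred (kred m)
    exact (kred_of_chain (kred_chain m)).symm
  | a :: t, m => by
    show kred (a :: (t ++ m)) = kred (a :: (t ++ kred m))
    rw [← kred_cons_kred a (t ++ m), kred_append_right t m, kred_cons_kred]

/-- Shape of the reduced product of two reduced words. -/
lemma kred_append_reduced :
    ∀ (u v : List I), u ≠ [] → u.Chain' (· ≠ ·) → v ≠ [] → v.Chain' (· ≠ ·) →
      kred (u ++ v) = u ++ v ∨
      ∃ (c : I) (v' : List I), v = c :: v' ∧ u.getLast? = some c ∧ kred (u ++ v) = u ++ v'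
  | [], _, hu, _, _, _ => absurd rfl hu
  | [a], v, _, _, hv, hcv => by
    cases v with
    | nil => exact absurd rfl hv
    | cons c t =>
      by_cases h : a = c
      · refine Or.inr ⟨c, t, rfl, by rw [h]; rfl, ?_⟩
        show kred (a :: c :: t) = a :: t
        rw [kred, if_pos h, kred_of_chain hcv, h]
      · refine Or.inl ?_
        show kred (a :: c :: t) = a :: c :: t
        rw [kred, if_neg h, kred_of_chain hcv]
  | a :: b :: t, v, _, hcu, hv, hcv => by
    obtain ⟨hab, hcu'⟩ := List.isChain_cons_cons.1 hcu
    have key : kred ((a :: b :: t) ++ v) = a :: kred ((b :: t) ++ v) := by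
      show kred (a :: b :: (t ++ v)) = _
      rw [kred, if_neg hab]; rfl
    rcases kred_append_reduced (b :: t) v (by simp) hcu' hv hcv with h | ⟨c, v', hv', hlast, h⟩
    · exact Or.inl (by rw [key, h]; rfl)
    · refine Or.inr ⟨c, v', hv', ?_, by rw [key, h]; rfl⟩
      rw [List.getLast?_cons_cons]; exact hlast

lemma length_kred_append_left {u v : List I} (hu : u ≠ []) (hcu : u.Chain' (· ≠ ·))
    (hv : v ≠ []) (hcv : v.Chain' (· ≠ ·)) : u.length ≤ (kred (u ++ v)).length := by
  rcases kred_append_reduced u v hu hcu hv hcv with h | ⟨c, v', hv', _, h⟩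
  · rw [h]; simp
  · rw [h]; simp

lemma length_kred_append_right {u v : List I} (hu : u ≠ []) (hcu : u.Chain' (· ≠ ·))
    (hv : v ≠ []) (hcv : v.Chain' (· ≠ ·)) : v.length ≤ (kred (u ++ v)).length := by
  rcases kred_append_reduced u v hu hcu hv hcv with h | ⟨c, v', hv', _, h⟩
  · rw [h]; simp
  · rw [h, hv']
    simp only [List.length_append, List.length_cons]
    have : 1 ≤ u.length := Nat.one_le_iff_ne_zero.2 (by simpa using hu)
    omega

lemma mem_kred_append {u v : List I} (hu : u ≠ []) (hcu : u.Chain' (· ≠ ·))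
    (hv : v ≠ []) (hcv : v.Chain' (· ≠ ·)) {x : I} (hx : x ∈ u ∨ x ∈ v) :
    x ∈ kred (u ++ v) := by
  rcases kred_append_reduced u v hu hcu hv hcv with h | ⟨c, v', hv', hlast, h⟩
  · rw [h, List.mem_append]; tauto
  · rw [h, List.mem_append]
    rcases hx with hx | hx
    · exact Or.inl hx
    · rw [hv', List.mem_cons] at hx
      rcases hx with rfl | hx
      · exact Or.inl (List.mem_of_getLast? hlast)
      · exact Or.inr hx

/-- If the reduced product has the same length as a factor, it equals that factor. -/
lemma kred_append_eq_right {u v : List I} (hu : u ≠ []) (hcu : u.Chain' (· ≠ ·))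
    (hv : v ≠ []) (hcv : v.Chain' (· ≠ ·)) (hlen : (kred (u ++ v)).length = v.length) :
    kred (u ++ v) = v := by
  rcases kred_append_reduced u v hu hcu hv hcv with h | ⟨c, v', hv', hlast, h⟩
  · rw [h] at hlen ⊢
    have : u.length = 0 := by simp only [List.length_append] at hlen; omega
    rw [List.length_eq_zero_iff] at this
    exact absurd this hu
  · rw [h] at hlen ⊢
    rw [hv'] at hlen ⊢
    simp only [List.length_append, List.length_cons] at hlen
    have hu1 : u.length = 1 := by omega
    obtain ⟨x, hx⟩ := List.length_eq_one_iff.1 hu1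
    rw [hx] at hlast ⊢
    simp only [List.getLast?_singleton, Option.some_inj] at hlast
    rw [hlast]
    rfl

lemma kred_append_eq_left {u v : List I} (hu : u ≠ []) (hcu : u.Chain' (· ≠ ·))
    (hv : v ≠ []) (hcv : v.Chain' (· ≠ ·)) (hlen : (kred (u ++ v)).length = u.length) :
    kred (u ++ v) = u := by
  rcases kred_append_reduced u v hu hcu hv hcv with h | ⟨c, v', hv', hlast, h⟩
  · rw [h] at hlen ⊢
    have : v.length = 0 := by simp only [List.length_append] at hlen; omega
    rw [List.length_eq_zero_iff] at this
    exact absurd this hv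
  · rw [h] at hlen ⊢
    have hv'0 : v'.length = 0 := by
      simp only [List.length_append] at hlen
      omega
    rw [List.length_eq_zero_iff] at hv'0
    rw [hv'0]
    simp

end KRAux
namespace KRAux

variable {I : Type}

/-- The free product of one-element semigroups: nonempty reduced words. -/
def KW (I : Type) : Type := {l : List I // l ≠ [] ∧ l.Chain' (· ≠ ·)}

instance : Semigroup (KW I) where
  mul u v := ⟨kred (u.1 ++ v.1),
    kred_ne_nil (by simp [u.2.1]), kred_chain _⟩
  mul_assoc u v w := by
    apply Subtype.ext
    show kred (kred (u.1 ++ v.1) ++ w.1) = kred (u.1 ++ kred (v.1 ++ w.1))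
    rw [← kred_append_left, ← kred_append_right, List.append_assoc]

lemma KW.mul_val (u v : KW I) : (u * v).1 = kred (u.1 ++ v.1) := rfl

/-- Goodness: a bounded reduced word over a fixed sub-alphabet. -/
def KGood (N : ℕ) (A : Set I) (l : List I) : Prop :=
  l ≠ [] ∧ l.Chain' (· ≠ ·) ∧ l.length ≤ N ∧ ∀ x ∈ l, x ∈ A

/-- The truncated reduced-word semigroup, with a zero adjoined. -/
abbrev KT (I : Type) (N : ℕ) (A : Set I) : Type := Option {l : List I // KGood N A l}

variable {N : ℕ} {A : Set I}

def KT.mul : KT I N A → KT I N A → KT I N A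
  | some u, some v =>
      if h : KGood N A (kred (u.1 ++ v.1)) then some ⟨kred (u.1 ++ v.1), h⟩ else none
  | _, _ => none

lemma KT.none_mul (x : KT I N A) : KT.mul none x = none := by cases x <;> rfl
lemma KT.mul_none (x : KT I N A) : KT.mul x none = none := by cases x <;> rfl

lemma KGood.of_kred_append {u v : List I} (hu : KGood N A u) (hv : KGood N A v) :
    KGood N A (kred (u ++ v)) ↔ (kred (u ++ v)).length ≤ N := by
  constructor
  · exact fun h => h.2.2.1
  · intro h
    refine ⟨kred_ne_nil (by simp [hu.1]), kred_chain _, h, fun x hx => ?_⟩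
    rcases List.mem_append.1 (mem_kred hx) with hx | hx
    · exact hu.2.2.2 x hx
    · exact hv.2.2.2 x hx

instance : Semigroup (KT I N A) where
  mul := KT.mul
  mul_assoc u v w := by
    show KT.mul (KT.mul u v) w = KT.mul u (KT.mul v w)
    match u, v, w with
    | none, v, w => simp only [KT.mul_none, KT.none_mul]
    | some u, none, w => simp only [KT.mul_none, KT.none_mul]
    | some u, some v, none => simp only [KT.mul_none, KT.none_mul]
    | some u, some v, some w =>
      have h12 := kred_append_left (u.1 ++ v.1) w.1
      have h23 := kred_append_right u.1 (v.1 ++ w.1)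
      have hr12 : kred (kred (u.1 ++ v.1) ++ w.1) = kred (u.1 ++ v.1 ++ w.1) := h12.symm
      have hr23 : kred (u.1 ++ kred (v.1 ++ w.1)) = kred (u.1 ++ (v.1 ++ w.1)) := h23.symm
      by_cases hG : KGood N A (kred (u.1 ++ v.1 ++ w.1))
      · have hG' : KGood N A (kred (u.1 ++ (v.1 ++ w.1))) := by
          rwa [← List.append_assoc]
        have hG12 : KGood N A (kred (u.1 ++ v.1)) := by
          rw [KGood.of_kred_append u.2 v.2]
          calc (kred (u.1 ++ v.1)).length
              ≤ (kred (kred (u.1 ++ v.1) ++ w.1)).length :=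
                length_kred_append_left (kred_ne_nil (by simp [u.2.1])) (kred_chain _)
                  w.2.1 w.2.2.1
            _ ≤ N := by rw [hr12]; exact hG.2.2.1
        have hG23 : KGood N A (kred (v.1 ++ w.1)) := by
          rw [KGood.of_kred_append v.2 w.2]
          calc (kred (v.1 ++ w.1)).length
              ≤ (kred (u.1 ++ kred (v.1 ++ w.1))).length :=
                length_kred_append_right u.2.1 u.2.2.1
                  (kred_ne_nil (by simp [v.2.1])) (kred_chain _)
            _ ≤ N := by rw [hr23, ← List.append_assoc]; exact hG.2.2.1
        rw [show KT.mul (some u) (some v)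
            = some ⟨kred (u.1 ++ v.1), hG12⟩ from dif_pos hG12,
          show KT.mul (some v) (some w)
            = some ⟨kred (v.1 ++ w.1), hG23⟩ from dif_pos hG23]
        show dite _ _ _ = dite _ _ _
        rw [dif_pos (show KGood N A (kred (kred (u.1 ++ v.1) ++ w.1)) from hr12 ▸ hG),
          dif_pos (show KGood N A (kred (u.1 ++ kred (v.1 ++ w.1))) from hr23 ▸ hG')]
        apply congrArg
        apply Subtype.ext
        show kred (kred (u.1 ++ v.1) ++ w.1) = kred (u.1 ++ kred (v.1 ++ w.1))
        rw [hr12, hr23, List.append_assoc]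
      · -- both sides are none
        have L : KT.mul (KT.mul (some u) (some v)) (some w) = none := by
          by_cases hG12 : KGood N A (kred (u.1 ++ v.1))
          · rw [show KT.mul (some u) (some v)
                = some ⟨kred (u.1 ++ v.1), hG12⟩ from dif_pos hG12]
            show dite _ _ _ = none
            rw [dif_neg (show ¬ KGood N A (kred (kred (u.1 ++ v.1) ++ w.1)) from by
              rw [hr12]; exact hG)]
          · rw [show KT.mul (some u) (some v) = none from dif_neg hG12, KT.none_mul]
        have R : KT.mul (some u) (KT.mul (some v) (some w)) = none := by
          by_cases hG23 : KGood N A (kred (v.1 ++ w.1))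
          · rw [show KT.mul (some v) (some w)
                = some ⟨kred (v.1 ++ w.1), hG23⟩ from dif_pos hG23]
            show dite _ _ _ = none
            rw [dif_neg (show ¬ KGood N A (kred (u.1 ++ kred (v.1 ++ w.1))) from by
              rw [hr23, ← List.append_assoc]; exact hG)]
          · rw [show KT.mul (some v) (some w) = none from dif_neg hG23, KT.mul_none]
        rw [L, R]

lemma KT.mul_def (u v : KT I N A) : u * v = KT.mul u v := rfl

end KRAux
namespace KRAux

variable {I : Type} {N : ℕ} {A : Set I}

lemma KT.left_step {a t : KT I N A} {ws : {l : List I // KGood N A l}}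
    (h : KT.mul a t = some ws) :
    ∃ wt, t = some wt ∧ wt.1.length ≤ ws.1.length ∧
      (ws.1.length = wt.1.length → ws = wt) := by
  match a, t with
  | none, t => rw [KT.none_mul] at h; exact absurd h (by simp)
  | some a, none => rw [KT.mul_none] at h; exact absurd h (by simp)
  | some a, some t =>
    by_cases hG : KGood N A (kred (a.1 ++ t.1))
    · rw [show KT.mul (some a) (some t)
          = some ⟨kred (a.1 ++ t.1), hG⟩ from dif_pos hG] at h
      obtain rfl : ws = ⟨kred (a.1 ++ t.1), hG⟩ := by
        injection h with h'; exact h'.symm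
      refine ⟨t, rfl, ?_, ?_⟩
      · exact length_kred_append_right a.2.1 a.2.2.1 t.2.1 t.2.2.1
      · intro hlen
        exact Subtype.ext (kred_append_eq_right a.2.1 a.2.2.1 t.2.1 t.2.2.1 hlen)
    · rw [show KT.mul (some a) (some t) = none from dif_neg hG] at h
      exact absurd h (by simp)

lemma KT.right_step {t b : KT I N A} {ws : {l : List I // KGood N A l}}
    (h : KT.mul t b = some ws) :
    ∃ wt, t = some wt ∧ wt.1.length ≤ ws.1.length ∧
      (ws.1.length = wt.1.length → ws = wt) := by
  match t, b with
  | none, b => rw [KT.none_mul] at h; exact absurd h (by simp)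
  | some t, none => rw [KT.mul_none] at h; exact absurd h (by simp)
  | some t, some b =>
    by_cases hG : KGood N A (kred (t.1 ++ b.1))
    · rw [show KT.mul (some t) (some b)
          = some ⟨kred (t.1 ++ b.1), hG⟩ from dif_pos hG] at h
      obtain rfl : ws = ⟨kred (t.1 ++ b.1), hG⟩ := by
        injection h with h'; exact h'.symm
      refine ⟨t, rfl, ?_, ?_⟩
      · exact length_kred_append_left t.2.1 t.2.2.1 b.2.1 b.2.2.1
      · intro hlen
        exact Subtype.ext (kred_append_eq_left t.2.1 t.2.2.1 b.2.1 b.2.2.1 hlen)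
    · rw [show KT.mul (some t) (some b) = none from dif_neg hG] at h
      exact absurd h (by simp)

lemma KT.jbelow {s t : KT I N A} (h : JBelow s t) :
    s = none ∨ ∃ ws wt, s = some ws ∧ t = some wt ∧ wt.1.length ≤ ws.1.length ∧
      (ws.1.length = wt.1.length → ws = wt) := by
  match s with
  | none => exact Or.inl rfl
  | some ws =>
    refine Or.inr ?_
    obtain ⟨x, y, hxy⟩ := h
    rcases x with _ | a <;> rcases y with _ | b
    · -- x = 1, y = 1
      change (1 : WithOne (KT I N A)) * _ * 1 = _ at hxy
      rw [one_mul, mul_one] at hxy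
      obtain rfl : t = some ws := WithOne.coe_inj.1 hxy
      exact ⟨ws, ws, rfl, rfl, le_refl _, fun _ => rfl⟩
    · -- x = 1, y = coe b
      change (1 : WithOne (KT I N A)) * _ * WithOne.coe b = _ at hxy
      rw [one_mul, ← WithOne.coe_mul] at hxy
      have ht : t * b = some ws := WithOne.coe_inj.1 hxy
      obtain ⟨wt, rfl, h1, h2⟩ := KT.right_step (show KT.mul t b = some ws from ht)
      exact ⟨ws, wt, rfl, rfl, h1, h2⟩
    · -- x = coe a, y = 1
      change WithOne.coe a * _ * 1 = _ at hxy
      rw [mul_one, ← WithOne.coe_mul] at hxy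
      have ht : a * t = some ws := WithOne.coe_inj.1 hxy
      obtain ⟨wt, rfl, h1, h2⟩ := KT.left_step (show KT.mul a t = some ws from ht)
      exact ⟨ws, wt, rfl, rfl, h1, h2⟩
    · change WithOne.coe a * _ * WithOne.coe b = _ at hxy
      rw [← WithOne.coe_mul, ← WithOne.coe_mul] at hxy
      have ht : (a * t) * b = some ws := WithOne.coe_inj.1 hxy
      obtain ⟨w1, hw1, h1, h2⟩ := KT.right_step (show KT.mul (a*t) b = some ws from ht)
      obtain ⟨wt, rfl, h3, h4⟩ := KT.left_step (show KT.mul a t = some w1 from hw1)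
      refine ⟨ws, wt, rfl, rfl, le_trans h3 h1, fun hlen => ?_⟩
      have e1 : ws = w1 := h2 (le_antisymm (hlen ▸ h3) h1)
      have e2 : w1 = wt := h4 (by omega)
      rw [e1, e2]

lemma KT.j_trivial (s t : KT I N A) (hst : JBelow s t) (hts : JBelow t s) : s = t := by
  rcases KT.jbelow hst with rfl | ⟨ws, wt, rfl, rfl, h1, h2⟩
  · rcases KT.jbelow hts with rfl | ⟨_, _, _, h, _⟩
    · rfl
    · exact absurd h (by simp)
  · rcases KT.jbelow hts with h | ⟨wt', ws', ht', hs', h3, _⟩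
    · exact absurd h (by simp)
    · obtain rfl : wt' = wt := by injection ht' with h'; exact h'.symm
      obtain rfl : ws' = ws := by injection hs' with h'; exact h'.symm
      rw [h2 (le_antisymm h3 h1)]

lemma KT.finite (hA : A.Finite) : Finite (KT I N A) := by
  have : Finite {l : List I // KGood N A l} := by
    have hset : {l : List I | KGood N A l}.Finite := by
      have hA' : Finite ↥A := hA.to_subtype
      have h1 : {l : List ↥A | l.length ≤ N}.Finite := List.finite_length_le ↥A N
      have h2 : ((List.map (Subtype.val : ↥A → I)) '' {l : List ↥A | l.length ≤ N}).Finite :=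
        h1.image _
      refine h2.subset ?_
      rintro l ⟨-, -, hlen, hmem⟩
      refine ⟨l.attach.map (fun x => (⟨x.1, hmem x.1 x.2⟩ : ↥A)), ?_, ?_⟩
      · simp [hlen]
      · rw [List.map_map]
        simpa using List.attach_map_subtype_val l
    exact hset.to_subtype
  have : Fintype {l : List I // KGood N A l} := Fintype.ofFinite _
  unfold KT
  infer_instance

/-- The truncation homomorphism `KW → KT`. -/
def KT.trunc (N : ℕ) (A : Set I) : KW I →ₙ* KT I N A where
  toFun w := if h : KGood N A w.1 then some ⟨w.1, h⟩ else none
  map_mul' u v := by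
    show (if h : KGood N A (u*v).1 then (some ⟨(u*v).1, h⟩ : KT I N A) else none)
      = KT.mul (if h : KGood N A u.1 then some ⟨u.1, h⟩ else none)
          (if h : KGood N A v.1 then some ⟨v.1, h⟩ else none)
    by_cases hu : KGood N A u.1 <;> by_cases hv : KGood N A v.1
    · rw [dif_pos hu, dif_pos hv]
      show dite _ _ _ = dite _ _ _
      by_cases hG : KGood N A (kred (u.1 ++ v.1))
      · rw [dif_pos (show KGood N A (u * v).1 from hG), dif_pos hG]
        rfl
      · rw [dif_neg (show ¬ KGood N A (u * v).1 from hG), dif_neg hG]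
    · rw [dif_neg hv, KT.mul_none]
      refine dif_neg (fun hG => hv ?_)
      refine ⟨v.2.1, v.2.2, ?_, ?_⟩
      · calc v.1.length ≤ (kred (u.1 ++ v.1)).length :=
              length_kred_append_right u.2.1 u.2.2 v.2.1 v.2.2
          _ ≤ N := hG.2.2.1
      · intro x hx
        exact hG.2.2.2 x (mem_kred_append u.2.1 u.2.2 v.2.1 v.2.2 (Or.inr hx))
    · rw [dif_neg hu, KT.none_mul]
      refine dif_neg (fun hG => hu ?_)
      refine ⟨u.2.1, u.2.2, ?_, ?_⟩
      · calc u.1.length ≤ (kred (u.1 ++ v.1)).length :=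
              length_kred_append_left u.2.1 u.2.2 v.2.1 v.2.2
          _ ≤ N := hG.2.2.1
      · intro x hx
        exact hG.2.2.2 x (mem_kred_append u.2.1 u.2.2 v.2.1 v.2.2 (Or.inl hx))
    · rw [dif_neg hu, KT.none_mul]
      refine dif_neg (fun hG => hu ?_)
      refine ⟨u.2.1, u.2.2, ?_, ?_⟩
      · calc u.1.length ≤ (kred (u.1 ++ v.1)).length :=
              length_kred_append_left u.2.1 u.2.2 v.2.1 v.2.2
          _ ≤ N := hG.2.2.1
      · intro x hx
        exact hG.2.2.2 x (mem_kred_append u.2.1 u.2.2 v.2.1 v.2.2 (Or.inl hx))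

end KRAux
namespace KRAux

variable {I P : Type} [Semigroup P]

def prL (g : I → P) : I → List I → P
  | a, [] => g a
  | a, b :: t => g a * prL g b t

def prLT (g : I → P) (d : P) : List I → P
  | [] => d
  | a :: t => prL g a t

variable {g : I → P} {d : P}

lemma prL_cons (a c : I) (t : List I) : prL g a (c :: t) = g a * prL g c t := rfl

lemma g_mul_prL (hg : ∀ a, g a * g a = g a) (a : I) :
    ∀ t : List I, g a * prL g a t = prL g a t
  | [] => hg a
  | b :: t => by rw [prL_cons, ← mul_assoc, hg a]

lemma prL_ne (a : I) : ∀ {l : List I}, l ≠ [] → prL g a l = g a * prLT g d l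
  | [], h => absurd rfl h
  | c :: t, _ => rfl

lemma prLT_append : ∀ {l : List I} (m : List I), l ≠ [] → m ≠ [] →
    prLT g d (l ++ m) = prLT g d l * prLT g d m
  | [], _, hl, _ => absurd rfl hl
  | [a], m, _, hm => by
    show prL g a m = prL g a [] * prLT g d m
    exact prL_ne a hm
  | a :: b :: t, m, _, hm => by
    show prL g a ((b :: t) ++ m) = prL g a (b :: t) * prLT g d m
    rw [prL_ne (d := d) a (by simp), prL_ne (d := d) a (by simp),
      prLT_append (l := b :: t) m (by simp) hm, mul_assoc]

lemma prLT_kred (hg : ∀ a, g a * g a = g a) :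
    ∀ l : List I, l ≠ [] → prLT g d (kred l) = prLT g d l
  | [], h => absurd rfl h
  | [a], _ => rfl
  | a :: b :: t, _ => by
    by_cases h : a = b
    · rw [show kred (a :: b :: t) = kred (b :: t) from by rw [kred, if_pos h]]
      rw [prLT_kred hg (b :: t) (by simp)]
      show prLT g d (b :: t) = prL g a (b :: t)
      rw [h, show prLT g d (b :: t) = prL g b t from rfl, prL_cons, g_mul_prL hg]
    · rw [show kred (a :: b :: t) = a :: kred (b :: t) from by rw [kred, if_neg h]]
      obtain ⟨s, hs⟩ := kred_cons b t
      rw [hs]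
      show prL g a (b :: s) = prL g a (b :: t)
      rw [prL_cons, prL_cons]
      have : prL g b s = prL g b t := by
        have h1 : prLT g d (kred (b :: t)) = prLT g d (b :: t) :=
          prLT_kred hg (b :: t) (by simp)
        rw [hs] at h1
        exact h1
      rw [this]

end KRAux
/-- If `V ⊇ J`, the natural mapping from the free product of a family of
one-element semigroups to its `V`-coproduct is injective. -/
theorem injective_iota_trivial_factors (V : Pseudovariety) (hJ : ContainsJ V)
    {I : Type} [Nonempty I] (S : I → TopSgr) (hS : ∀ i, IsProV V (S i))
    (h1 : ∀ i, Nonempty (S i).carrier) (h2 : ∀ i, Subsingleton (S i).carrier)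
    (P : Type) [Semigroup P] (e : ∀ i, (S i).carrier →ₙ* P)
    (hP : IsFreeProduct (fun i => (S i).carrier) P e)
    (C : TopSgr) (φ : ∀ i, (S i).carrier →ₙ* C.carrier) (hC : IsCoproduct V S C φ)
    (ι : P →ₙ* C.carrier) (hι : ∀ i, ι.comp (e i) = φ i) :
    Function.Injective ⇑ι := by
  classical
  open KRAux in
  -- the generators of `P`
  have x : ∀ i, (S i).carrier := fun i => Classical.choice (h1 i)
  set g : I → P := fun i => e i (x i) with hg_def
  have hg : ∀ i, g i * g i = g i := by
    intro i
    show e i (x i) * e i (x i) = e i (x i)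
    rw [← map_mul]
    exact congrArg (e i) (Subsingleton.elim _ _)
  -- the canonical maps into the concrete free product `KW I`
  obtain ⟨c, hc⟩ : ∃ c : ∀ i, (S i).carrier →ₙ* KW I, ∀ i y, (c i y).1 = [i] := by
    refine ⟨fun i =>
      { toFun := fun _ => ⟨[i], by simp, by simp [List.Chain']⟩
        map_mul' := fun y z => ?_ }, fun i y => rfl⟩
    apply Subtype.ext
    show [i] = kred ([i] ++ [i])
    show [i] = kred [i, i]
    rw [show kred [i, i] = if i = i then kred [i] else i :: kred [i] from rfl, if_pos rfl]
    rfl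
  obtain ⟨Φ, hΦc, hΦuniq⟩ := hP.universal (KW I) c
  -- the section `σ : KW I → P`
  set d : P := g (Classical.arbitrary I) with hd_def
  obtain ⟨σ, hσ⟩ : ∃ σ : KW I →ₙ* P, ∀ w : KW I, σ w = prLT g d w.1 := by
    refine ⟨{ toFun := fun w => prLT g d w.1, map_mul' := fun u v => ?_ }, fun w => rfl⟩
    show prLT g d (kred (u.1 ++ v.1)) = prLT g d u.1 * prLT g d v.1
    rw [prLT_kred hg _ (by simp [u.2.1]), prLT_append v.1 u.2.1 v.2.1]
  have hσc : ∀ i, σ.comp (c i) = e i := by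
    intro i
    ext y
    show σ (c i y) = e i y
    rw [hσ, hc i y]
    show g i = e i y
    exact congrArg (e i) (Subsingleton.elim _ _)
  have hσΦ : ∀ p : P, σ (Φ p) = p := by
    obtain ⟨F, hF, hFuniq⟩ := hP.universal P e
    have hA : σ.comp Φ = F := by
      apply hFuniq
      intro i
      rw [MulHom.comp_assoc, hΦc i, hσc i]
    have hB : MulHom.id P = F := by
      apply hFuniq
      intro i
      ext y
      rfl
    intro p
    exact congrArg (fun h : P →ₙ* P => h p) (hA.trans hB.symm)
  have hΦinj : Function.Injective ⇑Φ := by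
    intro p q hpq
    rw [← hσΦ p, ← hσΦ q, hpq]
  -- now the separation argument
  intro p q hpq
  set u : KW I := Φ p with hu_def
  set v : KW I := Φ q with hv_def
  set Nn : ℕ := max u.1.length v.1.length with hNn_def
  set As : Set I := {y | y ∈ u.1 ∨ y ∈ v.1} with hAs_def
  have hAs : As.Finite := Set.Finite.union (u.1.finite_toSet) (v.1.finite_toSet)
  haveI hXfin : Finite (KT I Nn As) := KT.finite hAs
  have hXmem : V.Mem (KT I Nn As) := hJ _ (fun s t hst hts => KT.j_trivial s t hst hts)
  haveI hXfin' : Finite (discTopSgr (KT I Nn As)).carrier := hXfin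
  haveI hdt : DiscreteTopology (discTopSgr (KT I Nn As)).carrier := ⟨rfl⟩
  have hproV : IsProV V (discTopSgr (KT I Nn As)) := by
    refine ⟨?_, ?_, ?_, ?_⟩
    · exact Finite.compactSpace
    · exact DiscreteTopology.toT2Space
    · exact ⟨continuous_of_discreteTopology⟩
    · intro a b hab
      exact ⟨⟨KT I Nn As, hXmem⟩, MulHom.id _, continuous_id, hab⟩
  -- the truncation homomorphism and the induced map on `P`
  have hsubcont : ∀ (i : I) (f : (S i).carrier → (discTopSgr (KT I Nn As)).carrier),
      @Continuous _ _ _ (TopSgr.top (discTopSgr (KT I Nn As))) f := by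
    intro i f
    haveI := h2 i
    refine continuous_def.2 fun s _ => ?_
    rcases (f ⁻¹' s).eq_empty_or_nonempty with h | h
    · rw [h]; exact isOpen_empty
    · have : f ⁻¹' s = Set.univ := Set.eq_univ_of_forall fun z => by
        obtain ⟨w, hw⟩ := h
        rwa [show z = w from Subsingleton.elim z w]
      rw [this]; exact isOpen_univ
  obtain ⟨Ψ, ⟨hΨcont, hΨcomp⟩, -⟩ :=
    hC.universal (discTopSgr (KT I Nn As)) hproV
      (fun i => ((KT.trunc Nn As).comp Φ).comp (e i)) (fun i => hsubcont i _)
  have hFeq : Ψ.comp ι = (KT.trunc Nn As).comp Φ := by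
    obtain ⟨G, hG, hGuniq⟩ :=
      hP.universal (KT I Nn As) (fun i => ((KT.trunc Nn As).comp Φ).comp (e i))
    have hA : Ψ.comp ι = G := by
      apply hGuniq
      intro i
      exact (MulHom.comp_assoc (e i) ι Ψ).trans ((congrArg (fun h => Ψ.comp h) (hι i)).trans (hΨcomp i))
    have hB : (KT.trunc Nn As).comp Φ = G := by
      apply hGuniq
      intro i
      rfl
    rw [hA, hB]
  have hFpq : KT.trunc Nn As u = KT.trunc Nn As v := by
    have h1' : KT.trunc Nn As u = Ψ (ι p) :=
      (congrArg (fun h : P →ₙ* KT I Nn As => h p) hFeq).symm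
    have h2' : KT.trunc Nn As v = Ψ (ι q) :=
      (congrArg (fun h : P →ₙ* KT I Nn As => h q) hFeq).symm
    rw [h1', h2', hpq]
  -- compute the two sides
  have hGu : KGood Nn As u.1 :=
    ⟨u.2.1, u.2.2, le_max_left _ _, fun y hy => Or.inl hy⟩
  have hGv : KGood Nn As v.1 :=
    ⟨v.2.1, v.2.2, le_max_right _ _, fun y hy => Or.inr hy⟩
  have hτu : KT.trunc Nn As u = some ⟨u.1, hGu⟩ := dif_pos hGu
  have hτv : KT.trunc Nn As v = some ⟨v.1, hGv⟩ := dif_pos hGv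
  have hsome : (some ⟨u.1, hGu⟩ : KT I Nn As) = some ⟨v.1, hGv⟩ := by
    rw [← hτu, ← hτv]
    exact hFpq
  have huv : u = v := by
    apply Subtype.ext
    injection hsome with h'
    injection h'
  apply hΦinj
  rw [← hu_def, ← hv_def, huv]
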